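/- Let a_{α,0} = 2Γ(2α)cos(πα)/(Γ(α)²cos(πα/2)²). For every fixed x ∈ ℝ, the function a_{α,0}·(C̃_{1−α}(x) − C̃_{2+(1+α)²/2}(x)) converges pointwise to (2/π²)·C̃₂^{(1)}(x) as α → −1⁺. Moreover, for every α ∈ (−1, −3/4) and every x ∈ ℝ, one has a_{α,0}·(C̃_{1−α}(x) − C̃_{2+(1+α)²/2}(x)) ≥ (2/π²)·C̃₂^{(1)}(x). -/

import Mathlib

open scoped Real Topology
open Set Filter

/-- The normalized Clausen function `C̃_s(x) = ∑_{n ≥ 1} (cos (n x) - 1)/n^s`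
(absolutely convergent for `s > 1`). -/
noncomputable def Ct (s x : ℝ) : ℝ :=
  ∑' n : ℕ, (Real.cos (((n : ℝ) + 1) * x) - 1) / ((n : ℝ) + 1) ^ s

/-- `C̃₂^{(1)}(x)`, the derivative in `s` at `s = 2` of `s ↦ C̃_s(x)`, explicitly
`-∑_{n ≥ 1} (cos (n x) - 1)·log n / n²`. -/
noncomputable def CtDeriv2 (x : ℝ) : ℝ :=
  -∑' n : ℕ, (Real.cos (((n : ℝ) + 1) * x) - 1) * Real.log ((n : ℝ) + 1) / ((n : ℝ) + 1) ^ 2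

/-- The coefficient `a_{α,0} = 2Γ(2α)cos(πα)/(Γ(α)²cos(πα/2)²)`. -/
noncomputable def aCoeff (α : ℝ) : ℝ :=
  2 * Real.Gamma (2*α) * Real.cos (π * α) /
    (Real.Gamma α ^ 2 * Real.cos (π * α / 2) ^ 2)

section Helpers

private lemma sum_rpow {s : ℝ} (hs : 1 < s) :
    Summable (fun n : ℕ => ((n : ℝ) + 1) ^ (-s)) := by
  have h := (summable_nat_add_iff 1).mpr (Real.summable_one_div_nat_rpow.mpr hs)
  refine h.congr fun n => ?_
  push_cast
  rw [Real.rpow_neg (by positivity), one_div]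

private lemma log_le (n : ℕ) : Real.log ((n : ℝ) + 1) ≤ 8 * ((n : ℝ) + 1) ^ (1/8 : ℝ) := by
  have := Real.log_le_rpow_div (x := (n : ℝ) + 1) (ε := 1/8) (by positivity) (by norm_num)
  linarith

private lemma sum_of_le {f : ℕ → ℝ} {s : ℝ} (hs : 1 < s) (C : ℝ)
    (h0 : ∀ n, 0 ≤ f n) (hb : ∀ n, f n ≤ C * ((n : ℝ) + 1) ^ (-s)) : Summable f :=
  Summable.of_nonneg_of_le h0 hb ((sum_rpow hs).mul_left C)

/-- summability of `(1-cos) * log / m^2` -/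
private lemma sumA (x : ℝ) :
    Summable (fun n : ℕ => (1 - Real.cos (((n : ℝ) + 1) * x)) * Real.log ((n : ℝ) + 1)
      * ((n : ℝ) + 1) ^ (-(2 : ℝ))) := by
  refine sum_of_le (s := 15/8) (by norm_num) 16 (fun n => ?_) (fun n => ?_)
  · have h1 : Real.cos (((n : ℝ) + 1) * x) ≤ 1 := Real.cos_le_one _
    have h2 : (0:ℝ) ≤ Real.log ((n : ℝ) + 1) :=
      Real.log_nonneg (le_add_of_nonneg_left (Nat.cast_nonneg n))
    have h4 : (0:ℝ) ≤ ((n : ℝ) + 1) ^ (-(2:ℝ)) := by positivity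
    exact mul_nonneg (mul_nonneg (by linarith) h2) h4
  · have hm : (1:ℝ) ≤ (n : ℝ) + 1 := le_add_of_nonneg_left (Nat.cast_nonneg n)
    have hm0 : (0:ℝ) < (n : ℝ) + 1 := by positivity
    have h1 : Real.cos (((n : ℝ) + 1) * x) ≤ 1 := Real.cos_le_one _
    have h1' : -1 ≤ Real.cos (((n : ℝ) + 1) * x) := Real.neg_one_le_cos _
    have h2 : (0:ℝ) ≤ Real.log ((n : ℝ) + 1) := Real.log_nonneg hm
    have h3 := log_le n
    have h4 : (0:ℝ) < ((n : ℝ) + 1) ^ (-(2:ℝ)) := by positivity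
    have h5 : ((n : ℝ) + 1) ^ (1/8 : ℝ) * ((n : ℝ) + 1) ^ (-(2:ℝ))
        = ((n : ℝ) + 1) ^ (-(15/8 : ℝ)) := by
      rw [← Real.rpow_add hm0]; norm_num
    have h6 : (1 - Real.cos (((n : ℝ) + 1) * x)) * Real.log ((n : ℝ) + 1)
        ≤ 16 * ((n : ℝ) + 1) ^ (1/8 : ℝ) := by nlinarith
    calc (1 - Real.cos (((n : ℝ) + 1) * x)) * Real.log ((n : ℝ) + 1) * ((n : ℝ) + 1) ^ (-(2:ℝ))
        ≤ 16 * ((n : ℝ) + 1) ^ (1/8 : ℝ) * ((n : ℝ) + 1) ^ (-(2:ℝ)) :=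
          mul_le_mul_of_nonneg_right h6 h4.le
      _ = 16 * ((n : ℝ) + 1) ^ (-(15/8 : ℝ)) := by rw [mul_assoc, h5]

/-- summability of `log^2 / m^{7/4}` -/
private lemma sumB :
    Summable (fun n : ℕ => Real.log ((n : ℝ) + 1) ^ 2 * ((n : ℝ) + 1) ^ (-(7/4 : ℝ))) := by
  refine sum_of_le (s := 3/2) (by norm_num) 64 (fun n => ?_) (fun n => ?_)
  · have h2 : (0:ℝ) ≤ Real.log ((n : ℝ) + 1) :=
      Real.log_nonneg (le_add_of_nonneg_left (Nat.cast_nonneg n))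
    positivity
  · have hm : (1:ℝ) ≤ (n : ℝ) + 1 := le_add_of_nonneg_left (Nat.cast_nonneg n)
    have hm0 : (0:ℝ) < (n : ℝ) + 1 := by positivity
    have h2 : (0:ℝ) ≤ Real.log ((n : ℝ) + 1) := Real.log_nonneg hm
    have h3 := log_le n
    have h4 : (0:ℝ) < ((n : ℝ) + 1) ^ (-(7/4:ℝ)) := by positivity
    have h7 : (0:ℝ) ≤ ((n : ℝ) + 1) ^ (1/8 : ℝ) := by positivity
    have h5 : ((n : ℝ) + 1) ^ (1/8 : ℝ) * ((n : ℝ) + 1) ^ (1/8 : ℝ) * ((n : ℝ) + 1) ^ (-(7/4:ℝ))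
        = ((n : ℝ) + 1) ^ (-(3/2 : ℝ)) := by
      rw [← Real.rpow_add hm0, ← Real.rpow_add hm0]; norm_num
    have h6 : Real.log ((n : ℝ) + 1) ^ 2
        ≤ 64 * (((n : ℝ) + 1) ^ (1/8 : ℝ) * ((n : ℝ) + 1) ^ (1/8 : ℝ)) := by nlinarith
    calc Real.log ((n : ℝ) + 1) ^ 2 * ((n : ℝ) + 1) ^ (-(7/4:ℝ))
        ≤ 64 * (((n : ℝ) + 1) ^ (1/8 : ℝ) * ((n : ℝ) + 1) ^ (1/8 : ℝ)) * ((n : ℝ) + 1) ^ (-(7/4:ℝ)) :=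
          mul_le_mul_of_nonneg_right h6 h4.le
      _ = 64 * ((n : ℝ) + 1) ^ (-(3/2 : ℝ)) := by rw [mul_assoc, h5]

/-- summability of `(1-cos) * m^{-s}` for `s > 1` -/
private lemma sumC (x : ℝ) {s : ℝ} (hs : 1 < s) :
    Summable (fun n : ℕ => (1 - Real.cos (((n : ℝ) + 1) * x)) * ((n : ℝ) + 1) ^ (-s)) := by
  refine sum_of_le hs 2 (fun n => ?_) (fun n => ?_)
  · have h1 : Real.cos (((n : ℝ) + 1) * x) ≤ 1 := Real.cos_le_one _
    have h4 : (0:ℝ) ≤ ((n : ℝ) + 1) ^ (-s) := by positivity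
    exact mul_nonneg (by linarith) h4
  · have h1' : -1 ≤ Real.cos (((n : ℝ) + 1) * x) := Real.neg_one_le_cos _
    have h4 : (0:ℝ) ≤ ((n : ℝ) + 1) ^ (-s) := by positivity
    nlinarith

private lemma sum_main (x : ℝ) {s : ℝ} (hs : 1 < s) :
    Summable (fun n : ℕ => (Real.cos (((n : ℝ) + 1) * x) - 1) / ((n : ℝ) + 1) ^ s) := by
  refine ((sumC x hs).neg).congr fun n => ?_
  have hm0 : (0:ℝ) < (n : ℝ) + 1 := by positivity
  rw [Real.rpow_neg hm0.le]
  field_simp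
  ring

end Helpers

section TsumIds

private lemma CtDeriv2_eq (x : ℝ) :
    CtDeriv2 x = ∑' n : ℕ, (1 - Real.cos (((n : ℝ) + 1) * x)) * Real.log ((n : ℝ) + 1)
      * ((n : ℝ) + 1) ^ (-(2 : ℝ)) := by
  rw [CtDeriv2, ← tsum_neg]
  congr 1
  funext n
  have hm0 : (0:ℝ) < (n : ℝ) + 1 := by positivity
  have h2 : ((n : ℝ) + 1) ^ (-(2:ℝ)) = (((n : ℝ) + 1) ^ (2:ℕ))⁻¹ := by
    rw [Real.rpow_neg hm0.le]
    norm_num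
  rw [h2]
  field_simp
  ring

private lemma CtDeriv2_nonneg (x : ℝ) : 0 ≤ CtDeriv2 x := by
  rw [CtDeriv2_eq]
  refine tsum_nonneg fun n => ?_
  have h1 : Real.cos (((n : ℝ) + 1) * x) ≤ 1 := Real.cos_le_one _
  have h2 : (0:ℝ) ≤ Real.log ((n : ℝ) + 1) :=
    Real.log_nonneg (le_add_of_nonneg_left (Nat.cast_nonneg n))
  have h4 : (0:ℝ) ≤ ((n : ℝ) + 1) ^ (-(2:ℝ)) := by positivity
  exact mul_nonneg (mul_nonneg (by linarith) h2) h4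

private lemma Ct_sub_eq (x : ℝ) {s₁ s₂ : ℝ} (h₁ : 1 < s₁) (h₂ : 1 < s₂) :
    Ct s₂ x - Ct s₁ x = ∑' n : ℕ, (1 - Real.cos (((n : ℝ) + 1) * x))
      * (((n : ℝ) + 1) ^ (-s₁) - ((n : ℝ) + 1) ^ (-s₂)) := by
  rw [Ct, Ct, ← Summable.tsum_sub (sum_main x h₂) (sum_main x h₁)]
  congr 1
  funext n
  have hm0 : (0:ℝ) < (n : ℝ) + 1 := by positivity
  rw [Real.rpow_neg hm0.le, Real.rpow_neg hm0.le]
  have e1 : ((n : ℝ) + 1) ^ s₁ ≠ 0 := by positivity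
  have e2 : ((n : ℝ) + 1) ^ s₂ ≠ 0 := by positivity
  field_simp
  ring

end TsumIds

section PerTerm

private lemma exp_sub_one_le (t : ℝ) (ht : 0 ≤ t) : Real.exp t - 1 ≤ t * Real.exp t := by
  have h := Real.add_one_le_exp (-t)
  have h2 : Real.exp (-t) = (Real.exp t)⁻¹ := Real.exp_neg t
  have h3 : (0:ℝ) < Real.exp t := Real.exp_pos t
  have h4 : (1 - t) * Real.exp t ≤ 1 := by
    rw [h2] at h
    calc (1 - t) * Real.exp t ≤ (Real.exp t)⁻¹ * Real.exp t :=
          mul_le_mul_of_nonneg_right (by linarith) h3.le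
      _ = 1 := inv_mul_cancel₀ h3.ne'
  nlinarith

private lemma pt_lower {m ε : ℝ} (hm : 1 ≤ m) (hε : 0 < ε) :
    ε * (Real.log m * m ^ (-(2:ℝ))) ≤ m ^ (-(2 - ε)) - m ^ (-(2 + ε^2/2)) := by
  have hm0 : (0:ℝ) < m := by linarith
  have hL : 0 ≤ Real.log m := Real.log_nonneg hm
  have e1 : m ^ (-(2 - ε)) = m ^ ε * m ^ (-(2:ℝ)) := by
    rw [← Real.rpow_add hm0]; ring_nf
  have e2 : m ^ (-(2 + ε^2/2)) = m ^ (-(ε^2/2)) * m ^ (-(2:ℝ)) := by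
    rw [← Real.rpow_add hm0]; ring_nf
  have h3 : m ^ (-(ε^2/2)) ≤ 1 := Real.rpow_le_one_of_one_le_of_nonpos hm (by nlinarith [sq_nonneg ε])
  have h4 : 1 + ε * Real.log m ≤ m ^ ε := by
    rw [Real.rpow_def_of_pos hm0]
    have := Real.add_one_le_exp (Real.log m * ε)
    linarith
  have h5 : (0:ℝ) ≤ m ^ (-(2:ℝ)) := by positivity
  rw [e1, e2]
  have : ε * Real.log m ≤ m ^ ε - m ^ (-(ε^2/2)) := by linarith
  nlinarith

private lemma pt_upper {m ε : ℝ} (hm : 1 ≤ m) (hε : 0 < ε) (hε4 : ε ≤ 1/4) :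
    m ^ (-(2 - ε)) - m ^ (-(2 + ε^2/2)) ≤
      ε * (Real.log m * m ^ (-(2:ℝ))
        + ε * (Real.log m ^ 2 * m ^ (-(7/4:ℝ)) + Real.log m * m ^ (-(2:ℝ)) / 2)) := by
  have hm0 : (0:ℝ) < m := by linarith
  have hL : 0 ≤ Real.log m := Real.log_nonneg hm
  have e1 : m ^ (-(2 - ε)) = m ^ ε * m ^ (-(2:ℝ)) := by
    rw [← Real.rpow_add hm0]; ring_nf
  have e2 : m ^ (-(2 + ε^2/2)) = m ^ (-(ε^2/2)) * m ^ (-(2:ℝ)) := by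
    rw [← Real.rpow_add hm0]; ring_nf
  have e3 : m ^ ((1/4:ℝ)) * m ^ (-(2:ℝ)) = m ^ (-(7/4:ℝ)) := by
    rw [← Real.rpow_add hm0]; norm_num
  -- 1 - m^{-ε²/2} ≤ ε² L / 2
  have h4 : 1 - ε^2 * Real.log m / 2 ≤ m ^ (-(ε^2/2)) := by
    rw [Real.rpow_def_of_pos hm0]
    have := Real.add_one_le_exp (Real.log m * -(ε^2/2))
    linarith
  -- m^ε - 1 ≤ εL + ε²L² m^{1/4}
  have hexp : m ^ ε = Real.exp (ε * Real.log m) := by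
    rw [Real.rpow_def_of_pos hm0]; ring_nf
  have h6 : m ^ ε - 1 ≤ (ε * Real.log m) * m ^ ε := by
    rw [hexp]; exact exp_sub_one_le _ (by positivity)
  have h7 : m ^ ε ≤ m ^ ((1/4:ℝ)) := Real.rpow_le_rpow_of_exponent_le hm hε4
  have h8 : (0:ℝ) < m ^ ε := by positivity
  have h9 : m ^ ε - 1 ≤ ε * Real.log m + ε^2 * Real.log m ^ 2 * m ^ ((1/4:ℝ)) := by
    have h10 : m ^ ε ≤ 1 + (ε * Real.log m) * m ^ ((1/4:ℝ)) := by
      nlinarith [mul_le_mul_of_nonneg_left h7 (mul_nonneg hε.le hL)]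
    nlinarith [mul_le_mul_of_nonneg_left h10 (mul_nonneg hε.le hL)]
  have h11 : (0:ℝ) ≤ m ^ (-(2:ℝ)) := by positivity
  rw [e1, e2]
  have h12 : m ^ ε - m ^ (-(ε^2/2)) ≤
      ε * Real.log m + ε^2 * Real.log m ^ 2 * m ^ ((1/4:ℝ)) + ε^2 * Real.log m / 2 := by
    linarith
  have h13 : (m ^ ε - m ^ (-(ε^2/2))) * m ^ (-(2:ℝ)) ≤
      (ε * Real.log m + ε^2 * Real.log m ^ 2 * m ^ ((1/4:ℝ)) + ε^2 * Real.log m / 2) * m ^ (-(2:ℝ)) :=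
    mul_le_mul_of_nonneg_right h12 h11
  calc m ^ ε * m ^ (-(2:ℝ)) - m ^ (-(ε^2/2)) * m ^ (-(2:ℝ))
      = (m ^ ε - m ^ (-(ε^2/2))) * m ^ (-(2:ℝ)) := by ring
    _ ≤ (ε * Real.log m + ε^2 * Real.log m ^ 2 * m ^ ((1/4:ℝ)) + ε^2 * Real.log m / 2) * m ^ (-(2:ℝ)) := h13
    _ = ε * (Real.log m * m ^ (-(2:ℝ))
        + ε * (Real.log m ^ 2 * (m ^ ((1/4:ℝ)) * m ^ (-(2:ℝ))) + Real.log m * m ^ (-(2:ℝ)) / 2)) := by ring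
    _ = _ := by rw [e3]

end PerTerm

noncomputable def Kc : ℝ :=
  ∑' n : ℕ, Real.log ((n : ℝ) + 1) ^ 2 * ((n : ℝ) + 1) ^ (-(7/4 : ℝ))

section ClausenBounds

private lemma hs1_gt {α : ℝ} (hα : α ∈ Set.Ioo (-1 : ℝ) (-3/4)) : 1 < 1 - α := by
  have := hα.2; linarith

private lemma hs2_gt (α : ℝ) : 1 < 2 + (1 + α)^2/2 := by nlinarith [sq_nonneg (1+α)]

private lemma F_lower (x : ℝ) {α : ℝ} (hα : α ∈ Set.Ioo (-1 : ℝ) (-3/4)) :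
    (1 + α) * CtDeriv2 x ≤ Ct (2 + (1 + α)^2/2) x - Ct (1 - α) x := by
  obtain ⟨h1, h2⟩ := hα
  have hε : 0 < 1 + α := by linarith
  rw [Ct_sub_eq x (hs1_gt ⟨h1, h2⟩) (hs2_gt α), CtDeriv2_eq, ← tsum_mul_left]
  refine Summable.tsum_le_tsum (fun n => ?_) ((sumA x).mul_left (1+α))
    (((sumC x (hs1_gt ⟨h1, h2⟩)).sub (sumC x (hs2_gt α))).congr fun n => by ring)
  have hm : (1:ℝ) ≤ (n : ℝ) + 1 := le_add_of_nonneg_left (Nat.cast_nonneg n)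
  have hcos : Real.cos (((n : ℝ) + 1) * x) ≤ 1 := Real.cos_le_one _
  have hc : (0:ℝ) ≤ 1 - Real.cos (((n : ℝ) + 1) * x) := by linarith
  have key := pt_lower (m := (n : ℝ) + 1) hm hε
  rw [show -(2 - (1 + α)) = -(1 - α) by ring] at key
  calc (1 + α) * ((1 - Real.cos (((n : ℝ) + 1) * x)) * Real.log ((n : ℝ) + 1)
        * ((n : ℝ) + 1) ^ (-(2:ℝ)))
      = (1 - Real.cos (((n : ℝ) + 1) * x))
        * ((1 + α) * (Real.log ((n : ℝ) + 1) * ((n : ℝ) + 1) ^ (-(2:ℝ)))) := by ring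
    _ ≤ (1 - Real.cos (((n : ℝ) + 1) * x))
        * (((n : ℝ) + 1) ^ (-(1 - α)) - ((n : ℝ) + 1) ^ (-(2 + (1 + α)^2/2))) :=
        mul_le_mul_of_nonneg_left key hc

private lemma F_upper (x : ℝ) {α : ℝ} (hα : α ∈ Set.Ioo (-1 : ℝ) (-3/4)) :
    Ct (2 + (1 + α)^2/2) x - Ct (1 - α) x ≤
      (1 + α) * (CtDeriv2 x + (1 + α) * (2 * Kc + CtDeriv2 x / 2)) := by
  obtain ⟨h1, h2⟩ := hα
  have hε : 0 < 1 + α := by linarith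
  have hε4 : 1 + α ≤ 1/4 := by linarith
  have hsumU : Summable (fun n : ℕ =>
      (1 + α) * ((1 - Real.cos (((n : ℝ) + 1) * x)) * Real.log ((n : ℝ) + 1)
          * ((n : ℝ) + 1) ^ (-(2:ℝ))
        + (1 + α) * (2 * (Real.log ((n : ℝ) + 1) ^ 2 * ((n : ℝ) + 1) ^ (-(7/4:ℝ)))
          + (1 - Real.cos (((n : ℝ) + 1) * x)) * Real.log ((n : ℝ) + 1)
            * ((n : ℝ) + 1) ^ (-(2:ℝ)) / 2))) :=
    (((sumA x).add (((sumB.mul_left 2).add ((sumA x).div_const 2)).mul_left (1+α))).mul_left (1+α))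
  have hU : ∑' n : ℕ,
      (1 + α) * ((1 - Real.cos (((n : ℝ) + 1) * x)) * Real.log ((n : ℝ) + 1)
          * ((n : ℝ) + 1) ^ (-(2:ℝ))
        + (1 + α) * (2 * (Real.log ((n : ℝ) + 1) ^ 2 * ((n : ℝ) + 1) ^ (-(7/4:ℝ)))
          + (1 - Real.cos (((n : ℝ) + 1) * x)) * Real.log ((n : ℝ) + 1)
            * ((n : ℝ) + 1) ^ (-(2:ℝ)) / 2))
      = (1 + α) * (CtDeriv2 x + (1 + α) * (2 * Kc + CtDeriv2 x / 2)) := by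
    rw [tsum_mul_left]
    congr 1
    rw [Summable.tsum_add (sumA x) (((sumB.mul_left 2).add ((sumA x).div_const 2)).mul_left (1+α)),
      CtDeriv2_eq, tsum_mul_left, Summable.tsum_add (sumB.mul_left 2) ((sumA x).div_const 2),
      tsum_mul_left, tsum_div_const, Kc]
  rw [Ct_sub_eq x (hs1_gt ⟨h1, h2⟩) (hs2_gt α), ← hU]
  refine Summable.tsum_le_tsum (fun n => ?_)
    (((sumC x (hs1_gt ⟨h1, h2⟩)).sub (sumC x (hs2_gt α))).congr fun n => by ring) hsumU
  have hm : (1:ℝ) ≤ (n : ℝ) + 1 := le_add_of_nonneg_left (Nat.cast_nonneg n)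
  have hcos : Real.cos (((n : ℝ) + 1) * x) ≤ 1 := Real.cos_le_one _
  have hcos' : -1 ≤ Real.cos (((n : ℝ) + 1) * x) := Real.neg_one_le_cos _
  have hc : (0:ℝ) ≤ 1 - Real.cos (((n : ℝ) + 1) * x) := by linarith
  have hc2 : 1 - Real.cos (((n : ℝ) + 1) * x) ≤ 2 := by linarith
  have hL : (0:ℝ) ≤ Real.log ((n : ℝ) + 1) := Real.log_nonneg hm
  have hm2 : (0:ℝ) ≤ ((n : ℝ) + 1) ^ (-(2:ℝ)) := by positivity
  have hm74 : (0:ℝ) ≤ ((n : ℝ) + 1) ^ (-(7/4:ℝ)) := by positivity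
  have key := pt_upper (m := (n : ℝ) + 1) hm hε hε4
  rw [show -(2 - (1 + α)) = -(1 - α) by ring] at key
  have hmul := mul_le_mul_of_nonneg_left key hc
  have hextra : 0 ≤ (1+α)^2 * ((2 - (1 - Real.cos (((n : ℝ) + 1) * x)))
      * (Real.log ((n : ℝ) + 1) ^ 2 * ((n : ℝ) + 1) ^ (-(7/4:ℝ)))) := by
    have : (0:ℝ) ≤ 2 - (1 - Real.cos (((n : ℝ) + 1) * x)) := by linarith
    positivity
  nlinarith [hmul, hextra]

private lemma Kc_nonneg : 0 ≤ Kc := by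
  refine tsum_nonneg fun n => ?_
  have hL : (0:ℝ) ≤ Real.log ((n : ℝ) + 1) := Real.log_nonneg (le_add_of_nonneg_left (Nat.cast_nonneg n))
  positivity

end ClausenBounds

section Coefficient

private lemma aCoeff_eq {α : ℝ} (hα : α ∈ Set.Ioo (-1 : ℝ) (-3/4)) :
    aCoeff α = -(Real.Gamma (1 + 2*(1+α)) * Real.cos (π*(1+α)) * (1 - (1+α)) * (1+α)) /
      (2 * (1 - 2*(1+α)) * Real.Gamma (1 + (1+α)) ^ 2 * Real.sin (π*(1+α)/2) ^ 2) := by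
  obtain ⟨h1, h2⟩ := hα
  have hα0 : α ≠ 0 := by linarith
  have hα1 : α + 1 ≠ 0 := by linarith
  have h2α : (2:ℝ)*α ≠ 0 := by linarith
  have h2α1 : 2*α + 1 ≠ 0 := by intro h; nlinarith
  have h2α2 : 2*α + 2 ≠ 0 := by intro h; nlinarith
  -- Gamma recurrences
  have g1 : Real.Gamma (2*α + 1) = (2*α) * Real.Gamma (2*α) := Real.Gamma_add_one h2α
  have g2 : Real.Gamma (2*α + 2) = (2*α+1) * Real.Gamma (2*α + 1) := by
    have := Real.Gamma_add_one (s := 2*α+1) h2α1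
    rwa [show 2*α+1+1 = 2*α+2 by ring] at this
  have g3 : Real.Gamma (2*α + 3) = (2*α+2) * Real.Gamma (2*α + 2) := by
    have := Real.Gamma_add_one (s := 2*α+2) h2α2
    rwa [show 2*α+2+1 = 2*α+3 by ring] at this
  have g4 : Real.Gamma (α + 1) = α * Real.Gamma α := Real.Gamma_add_one hα0
  have g5 : Real.Gamma (α + 2) = (α+1) * Real.Gamma (α + 1) := by
    have := Real.Gamma_add_one (s := α+1) hα1
    rwa [show α+1+1 = α+2 by ring] at this
  have e1 : 1 + 2*(1+α) = 2*α + 3 := by ring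
  have e2 : 1 + (1+α) = α + 2 := by ring
  -- trig
  have t1 : Real.cos (π*(1+α)) = -Real.cos (π*α) := by
    rw [show π*(1+α) = π*α + π by ring, Real.cos_add_pi]
  have t2 : Real.sin (π*(1+α)/2) = Real.cos (π*α/2) := by
    rw [show π*(1+α)/2 = π/2 - (-(π*α/2)) by ring, Real.sin_pi_div_two_sub, Real.cos_neg]
  -- nonvanishing
  have hsin : Real.cos (π*α/2) ≠ 0 := by
    rw [← t2]
    have hp : 0 < π*(1+α)/2 := by
      have := Real.pi_pos; have : (0:ℝ) < 1 + α := by linarith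
      positivity
    have hp2 : π*(1+α)/2 < π := by
      have hπ := Real.pi_pos
      nlinarith
    exact (Real.sin_pos_of_pos_of_lt_pi hp hp2).ne'
  have hΓα2 : Real.Gamma (α + 2) ≠ 0 := (Real.Gamma_pos_of_pos (by linarith)).ne'
  have hΓα : Real.Gamma α ≠ 0 := by
    intro h; rw [g5, g4, h] at hΓα2; simp at hΓα2
  -- solve for Gamma α and Gamma (2α)
  have k1 : Real.Gamma (2*α) = Real.Gamma (2*α+3) / ((2*α) * (2*α+1) * (2*α+2)) := by
    rw [g3, g2, g1]; field_simp
  have k2 : Real.Gamma α = Real.Gamma (α+2) / (α * (α+1)) := by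
    rw [g5, g4]; field_simp
  have hA : (1:ℝ) - 2*(1+α) ≠ 0 := by intro h; nlinarith
  rw [aCoeff, k1, k2, e1, e2, t1, t2]
  field_simp [h2α1, h2α2, hA]
  ring

end Coefficient

private lemma Gamma_sq_le {ε : ℝ} (hε : 0 < ε) :
    Real.Gamma (1 + ε) ^ 2 ≤ Real.Gamma (1 + 2*ε) := by
  have hconv := Real.convexOn_log_Gamma
  have hmem1 : (1:ℝ) ∈ Set.Ioi (0:ℝ) := by norm_num
  have hmem2 : (1 + 2*ε) ∈ Set.Ioi (0:ℝ) := by simp; linarith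
  have h := hconv.2 hmem1 hmem2 (by norm_num : (0:ℝ) ≤ 1/2) (by norm_num : (0:ℝ) ≤ 1/2)
    (by norm_num)
  simp only [Function.comp_apply, smul_eq_mul] at h
  rw [Real.Gamma_one, Real.log_one] at h
  have he : (1:ℝ)/2 * 1 + 1/2 * (1 + 2*ε) = 1 + ε := by ring
  rw [he] at h
  have hp1 : 0 < Real.Gamma (1 + ε) := Real.Gamma_pos_of_pos (by linarith)
  have hp2 : 0 < Real.Gamma (1 + 2*ε) := Real.Gamma_pos_of_pos (by linarith)
  rw [← Real.log_le_log_iff (by positivity) hp2, Real.log_pow]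
  push_cast
  linarith

private lemma cos_fact {ε : ℝ} (h1 : 0 < ε) (h2 : ε < 1/4) :
    1 - 2*ε ≤ Real.cos (π*ε) * (1 - ε) := by
  have hb := Real.one_sub_sq_div_two_le_cos (x := π*ε)
  have hπ : π < 3.15 := Real.pi_lt_d2
  have hπ0 : 0 < π := Real.pi_pos
  have h3 : (0:ℝ) ≤ 1 - ε := by linarith
  have h4 : π^2*ε*(1-ε) ≤ 2 := by
    nlinarith [mul_pos (show (0:ℝ) < 1/4 - ε by linarith) (show (0:ℝ) < 3/4 - ε by linarith)]
  have h5 : π^2*ε^2*(1-ε)/2 ≤ ε := by nlinarith [mul_le_mul_of_nonneg_left h4 h1.le]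
  nlinarith [mul_le_mul_of_nonneg_right hb h3, h5]

private lemma neg_aCoeff_mul {α : ℝ} (hα : α ∈ Set.Ioo (-1 : ℝ) (-3/4)) :
    2/π^2 ≤ (-aCoeff α) * (1+α) := by
  obtain ⟨h1, h2⟩ := hα
  have hε : 0 < 1 + α := by linarith
  have hε4 : 1 + α < 1/4 := by linarith
  set ε := 1 + α with hεdef
  have hπ0 : 0 < π := Real.pi_pos
  have hsin_pos : 0 < Real.sin (π*ε/2) := by
    apply Real.sin_pos_of_pos_of_lt_pi
    · positivity
    · nlinarith
  have hG1 : 0 < Real.Gamma (1 + ε) := Real.Gamma_pos_of_pos (by linarith)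
  have hG2 : 0 < Real.Gamma (1 + 2*ε) := Real.Gamma_pos_of_pos (by linarith)
  have hcosp : 0 < Real.cos (π*ε) := by
    apply Real.cos_pos_of_mem_Ioo
    constructor <;> nlinarith
  have hden : 0 < 2 * (1 - 2*ε) * Real.Gamma (1 + ε) ^ 2 * Real.sin (π*ε/2) ^ 2 := by
    have : (0:ℝ) < 1 - 2*ε := by linarith
    positivity
  rw [aCoeff_eq ⟨h1, h2⟩, ← hεdef]
  rw [neg_div, neg_neg, div_mul_eq_mul_div, le_div_iff₀ hden]
  -- key facts
  have f1 : Real.sin (π*ε/2) ^ 2 ≤ (π*ε/2) ^ 2 := by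
    have hs := Real.sin_le (x := π*ε/2) (by positivity)
    nlinarith
  have f2 := Gamma_sq_le hε
  have f3 := cos_fact hε hε4
  have hππ : (0:ℝ) < π^2 := by positivity
  rw [div_mul_eq_mul_div, div_le_iff₀ hππ]
  calc 2 * (2 * (1 - 2*ε) * Real.Gamma (1 + ε) ^ 2 * Real.sin (π*ε/2) ^ 2)
      ≤ 2 * (2 * (1 - 2*ε) * Real.Gamma (1 + ε) ^ 2 * (π*ε/2) ^ 2) := by
        have hfac : (0:ℝ) ≤ 2 * (2 * (1 - 2*ε) * Real.Gamma (1 + ε) ^ 2) := by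
          have : (0:ℝ) < 1 - 2*ε := by linarith
          positivity
        nlinarith [mul_le_mul_of_nonneg_left f1 hfac]
    _ = ((1 - 2*ε) * Real.Gamma (1 + ε) ^ 2) * (ε^2 * π^2) := by ring
    _ ≤ (Real.cos (π*ε) * (1 - ε) * Real.Gamma (1 + 2*ε)) * (ε^2 * π^2) := by
        have hq : (0:ℝ) ≤ ε^2 * π^2 := by positivity
        apply mul_le_mul_of_nonneg_right _ hq
        calc (1 - 2*ε) * Real.Gamma (1 + ε) ^ 2
            ≤ (Real.cos (π*ε) * (1 - ε)) * Real.Gamma (1 + ε) ^ 2 :=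
              mul_le_mul_of_nonneg_right f3 (by positivity)
          _ ≤ (Real.cos (π*ε) * (1 - ε)) * Real.Gamma (1 + 2*ε) := by
              apply mul_le_mul_of_nonneg_left f2
              have : (0:ℝ) ≤ 1 - ε := by linarith
              positivity
    _ = Real.Gamma (1 + 2*ε) * Real.cos (π*ε) * (1 - ε) * ε * ε * π^2 := by ring

section Limit

private lemma one_ne_negnat : ∀ m : ℕ, (1:ℝ) ≠ -m := by
  intro m
  have : (0:ℝ) ≤ m := Nat.cast_nonneg m
  intro h; linarith

private lemma sin_div_tendsto :
    Tendsto (fun α : ℝ => Real.sin (π*(1+α)/2)/(1+α)) (𝓝[>] (-1:ℝ)) (𝓝 (π/2)) := by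
  have hπ0 : 0 < π := Real.pi_pos
  have hslope := hasDerivAt_iff_tendsto_slope.mp (Real.hasDerivAt_sin 0)
  rw [Real.cos_zero] at hslope
  have hs1 : Tendsto (fun t : ℝ => Real.sin t / t) (𝓝[≠] (0:ℝ)) (𝓝 1) := by
    refine hslope.congr fun t => ?_
    simp [slope_def_field]
  have hin : Tendsto (fun α : ℝ => π*(1+α)/2) (𝓝[>] (-1:ℝ)) (𝓝[≠] (0:ℝ)) := by
    rw [tendsto_nhdsWithin_iff]
    constructor
    · have hc : Continuous fun α : ℝ => π*(1+α)/2 := by continuity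
      have := (hc.tendsto (-1)).mono_left (nhdsWithin_le_nhds (s := Set.Ioi (-1:ℝ)))
      simpa using this
    · filter_upwards [self_mem_nhdsWithin] with α hα
      have hε : (0:ℝ) < 1 + α := by have : -1 < α := hα; linarith
      have : (0:ℝ) < π*(1+α)/2 := by positivity
      simpa using this.ne'
  have hcomp : Tendsto (fun α : ℝ => Real.sin (π*(1+α)/2) / (π*(1+α)/2))
      (𝓝[>] (-1:ℝ)) (𝓝 1) := hs1.comp hin
  have hmul := hcomp.const_mul (π/2)
  refine Tendsto.congr' ?_ (by simpa using hmul)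
  filter_upwards [self_mem_nhdsWithin] with α hα
  have hε : (0:ℝ) < 1 + α := by have : -1 < α := hα; linarith
  have hπ : π ≠ 0 := hπ0.ne'
  field_simp

private lemma coeff_tendsto :
    Tendsto (fun α : ℝ => Real.Gamma (1 + 2*(1+α)) * Real.cos (π*(1+α)) * (1 - (1+α)) /
      (2 * (1 - 2*(1+α)) * Real.Gamma (1 + (1+α)) ^ 2 * (Real.sin (π*(1+α)/2)/(1+α)) ^ 2))
      (𝓝[>] (-1:ℝ)) (𝓝 (2/π^2)) := by
  have hπ0 : 0 < π := Real.pi_pos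
  have hΓc : ContinuousAt Real.Gamma 1 := (Real.differentiableAt_Gamma one_ne_negnat).continuousAt
  have t1 : Tendsto (fun α : ℝ => 1 + 2*(1+α)) (𝓝[>] (-1:ℝ)) (𝓝 1) := by
    have hc : Continuous fun α : ℝ => 1 + 2*(1+α) := by continuity
    have := (hc.tendsto (-1)).mono_left (nhdsWithin_le_nhds (s := Set.Ioi (-1:ℝ)))
    norm_num at this; simpa using this
  have t2 : Tendsto (fun α : ℝ => 1 + (1+α)) (𝓝[>] (-1:ℝ)) (𝓝 1) := by
    have hc : Continuous fun α : ℝ => 1 + (1+α) := by continuity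
    have := (hc.tendsto (-1)).mono_left (nhdsWithin_le_nhds (s := Set.Ioi (-1:ℝ)))
    norm_num at this; simpa using this
  have t3 : Tendsto (fun α : ℝ => Real.cos (π*(1+α))) (𝓝[>] (-1:ℝ)) (𝓝 1) := by
    have hc : Continuous fun α : ℝ => Real.cos (π*(1+α)) := by continuity
    have := (hc.tendsto (-1)).mono_left (nhdsWithin_le_nhds (s := Set.Ioi (-1:ℝ)))
    norm_num at this; simpa using this
  have t4 : Tendsto (fun α : ℝ => 1 - (1+α)) (𝓝[>] (-1:ℝ)) (𝓝 1) := by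
    have hc : Continuous fun α : ℝ => 1 - (1+α) := by continuity
    have := (hc.tendsto (-1)).mono_left (nhdsWithin_le_nhds (s := Set.Ioi (-1:ℝ)))
    norm_num at this; simpa using this
  have t5 : Tendsto (fun α : ℝ => 2 * (1 - 2*(1+α))) (𝓝[>] (-1:ℝ)) (𝓝 2) := by
    have hc : Continuous fun α : ℝ => 2 * (1 - 2*(1+α)) := by continuity
    have := (hc.tendsto (-1)).mono_left (nhdsWithin_le_nhds (s := Set.Ioi (-1:ℝ)))
    norm_num at this; simpa using this
  have hnum : Tendsto (fun α : ℝ => Real.Gamma (1 + 2*(1+α)) * Real.cos (π*(1+α)) * (1 - (1+α)))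
      (𝓝[>] (-1:ℝ)) (𝓝 1) := by
    have hg1 : Tendsto (fun α : ℝ => Real.Gamma (1 + 2*(1+α))) (𝓝[>] (-1:ℝ)) (𝓝 1) := by
      have := (hΓc.tendsto).comp t1
      simpa [Real.Gamma_one, Function.comp_def] using this
    have := (hg1.mul t3).mul t4
    simpa using this
  have hden : Tendsto (fun α : ℝ =>
      2 * (1 - 2*(1+α)) * Real.Gamma (1 + (1+α)) ^ 2 * (Real.sin (π*(1+α)/2)/(1+α)) ^ 2)
      (𝓝[>] (-1:ℝ)) (𝓝 (2 * (π/2)^2)) := by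
    have hg2 : Tendsto (fun α : ℝ => Real.Gamma (1 + (1+α)) ^ 2) (𝓝[>] (-1:ℝ)) (𝓝 1) := by
      have := ((hΓc.tendsto).comp t2).pow 2
      simpa [Real.Gamma_one] using this
    have hsin2 := sin_div_tendsto.pow 2
    have := (t5.mul hg2).mul hsin2
    simpa using this
  have hne : (2 * (π/2)^2 : ℝ) ≠ 0 := by positivity
  have := hnum.div hden hne
  have heq : (1 : ℝ) / (2 * (π/2)^2) = 2/π^2 := by
    field_simp
  rwa [heq] at this

end Limit


/-- Pointwise convergence of `a_{α,0}(C̃_{1-α}(x) - C̃_{2+(1+α)²/2}(x))` to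
`(2/π²)·C̃₂^{(1)}(x)` as `α → -1⁺`, together with the lower bound for `α ∈ (-1, -3/4)`. -/
theorem aCoeff_clausen_diff_limit_and_bound :
    (∀ x : ℝ,
      Tendsto (fun α : ℝ => aCoeff α * (Ct (1 - α) x - Ct (2 + (1 + α)^2 / 2) x))
        (𝓝[>] (-1 : ℝ)) (𝓝 (2 / π ^ 2 * CtDeriv2 x))) ∧
    (∀ α ∈ Set.Ioo (-1 : ℝ) (-3/4), ∀ x : ℝ,
      2 / π ^ 2 * CtDeriv2 x ≤ aCoeff α * (Ct (1 - α) x - Ct (2 + (1 + α)^2 / 2) x)) := by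
  constructor
  · intro x
    have hmem : ∀ᶠ α in 𝓝[>] (-1:ℝ), α ∈ Set.Ioo (-1:ℝ) (-3/4) :=
      Ioo_mem_nhdsGT_of_mem (by norm_num)
    have h0 : Tendsto (fun α : ℝ => 1 + α) (𝓝[>] (-1:ℝ)) (𝓝 0) := by
      have hc : Continuous fun α : ℝ => 1 + α := by continuity
      have := (hc.tendsto (-1)).mono_left (nhdsWithin_le_nhds (s := Set.Ioi (-1:ℝ)))
      norm_num at this; simpa using this
    have hB : Tendsto (fun α : ℝ => (Ct (2 + (1 + α)^2/2) x - Ct (1 - α) x)/(1+α))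
        (𝓝[>] (-1:ℝ)) (𝓝 (CtDeriv2 x)) := by
      have hup : Tendsto (fun α : ℝ => CtDeriv2 x + (1+α) * (2 * Kc + CtDeriv2 x / 2))
          (𝓝[>] (-1:ℝ)) (𝓝 (CtDeriv2 x)) := by
        have := (tendsto_const_nhds (x := CtDeriv2 x) (f := 𝓝[>] (-1:ℝ))).add
          (h0.mul (tendsto_const_nhds (x := 2 * Kc + CtDeriv2 x / 2) (f := 𝓝[>] (-1:ℝ))))
        simpa using this
      refine tendsto_of_tendsto_of_tendsto_of_le_of_le' tendsto_const_nhds hup ?_ ?_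
      · filter_upwards [hmem] with α hα
        have hε : (0:ℝ) < 1 + α := by have := hα.1; linarith
        rw [le_div_iff₀ hε]
        have := F_lower x hα
        linarith
      · filter_upwards [hmem] with α hα
        have hε : (0:ℝ) < 1 + α := by have := hα.1; linarith
        rw [div_le_iff₀ hε]
        have := F_upper x hα
        linarith
    have hprod := coeff_tendsto.mul hB
    refine Tendsto.congr' ?_ hprod
    filter_upwards [hmem] with α hα
    obtain ⟨h1, h2⟩ := hα
    have hε : (0:ℝ) < 1 + α := by linarith
    have hε0 : (1:ℝ) + α ≠ 0 := hε.ne'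
    have hπ0 : 0 < π := Real.pi_pos
    have hsin : Real.sin (π*(1+α)/2) ≠ 0 := by
      refine (Real.sin_pos_of_pos_of_lt_pi (by positivity) ?_).ne'
      nlinarith
    have hΓ : Real.Gamma (1 + (1+α)) ≠ 0 := (Real.Gamma_pos_of_pos (by linarith)).ne'
    have hA : (1:ℝ) - 2*(1+α) ≠ 0 := by intro h; nlinarith
    rw [aCoeff_eq ⟨h1, h2⟩]
    field_simp
    ring
  · intro α hα x
    obtain ⟨ha, hb⟩ := hα
    have hε : (0:ℝ) < 1 + α := by linarith
    have h1 := F_lower x ⟨ha, hb⟩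
    have h2 := neg_aCoeff_mul ⟨ha, hb⟩
    have h3 := CtDeriv2_nonneg x
    have hπ0 : 0 < π := Real.pi_pos
    have hq : (0:ℝ) < 2/π^2 := by positivity
    have h4 : 0 ≤ -aCoeff α := by nlinarith
    nlinarith [mul_le_mul_of_nonneg_left h1 h4, mul_le_mul_of_nonneg_right h2 h3]
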